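/- Let Delta_0, Delta_1, ..., Delta_n be polytopes in R^n and let delta(I) = dim(sum_{j in I} Delta_j) for subsets I. For subsets I, J of {0,...,n}, dim(Delta_{I∩J}) + dim(Delta_{I∪J}) <= dim(Delta_I) + dim(Delta_J), where Delta_K denotes the Minkowski sum of Delta_j over j in K (with Delta_emptyset = {0}). -/

import Mathlib

open scoped Pointwise

/-- A polytope: the convex hull of a nonempty finite set of points. -/
def IsPolytope {V : Type*} [AddCommGroup V] [Module ℝ V] (P : Set V) : Prop :=
  ∃ s : Finset V, s.Nonempty ∧ P = convexHull ℝ (s : Set V)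

/-- The dimension of (the affine span of) a subset of a real vector space. -/
noncomputable def polyDim {V : Type*} [AddCommGroup V] [Module ℝ V] (P : Set V) : ℕ :=
  Module.finrank ℝ (affineSpan ℝ P).direction

lemma vectorSpan_set_add {V : Type*} [AddCommGroup V] [Module ℝ V] {A B : Set V}
    (hA : A.Nonempty) (hB : B.Nonempty) :
    vectorSpan ℝ (A + B) = vectorSpan ℝ A ⊔ vectorSpan ℝ B := by
  refine le_antisymm ?_ (sup_le ?_ ?_)
  · rw [vectorSpan_def, Submodule.span_le]
    rintro x ⟨u, hu, v, hv, rfl⟩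
    obtain ⟨a, haA, b, hbB, rfl⟩ := hu
    obtain ⟨a', haA', b', hbB', rfl⟩ := hv
    have : (a + b) -ᵥ (a' + b') = (a - a') + (b - b') := by
      simp only [vsub_eq_sub]; abel
    show (a + b) -ᵥ (a' + b') ∈ _
    rw [SetLike.mem_coe, this]
    exact Submodule.add_mem _
      (Submodule.mem_sup_left (vsub_mem_vectorSpan ℝ haA haA'))
      (Submodule.mem_sup_right (vsub_mem_vectorSpan ℝ hbB hbB'))
  · rw [vectorSpan_def, Submodule.span_le]
    rintro x ⟨a, haA, a', haA', rfl⟩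
    obtain ⟨b, hb⟩ := hB
    have : a -ᵥ a' = (a + b) -ᵥ (a' + b) := by simp only [vsub_eq_sub]; abel
    show a -ᵥ a' ∈ _
    rw [SetLike.mem_coe, this]
    exact vsub_mem_vectorSpan ℝ (Set.add_mem_add haA hb) (Set.add_mem_add haA' hb)
  · rw [vectorSpan_def, Submodule.span_le]
    rintro x ⟨b, hbB, b', hbB', rfl⟩
    obtain ⟨a, ha⟩ := hA
    have : b -ᵥ b' = (a + b) -ᵥ (a + b') := by simp only [vsub_eq_sub]; abel
    show b -ᵥ b' ∈ _
    rw [SetLike.mem_coe, this]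
    exact vsub_mem_vectorSpan ℝ (Set.add_mem_add ha hbB) (Set.add_mem_add ha hbB')

lemma sum_set_nonempty {ι V : Type*} [AddCommGroup V] {Δ : ι → Set V}
    (hne : ∀ j, (Δ j).Nonempty) (K : Finset ι) : (∑ j ∈ K, Δ j).Nonempty := by
  classical
  induction K using Finset.induction with
  | empty => exact ⟨0, by simp [show (0 : Set V) = {0} from rfl]⟩
  | @insert _ _ h ih =>
    rw [Finset.sum_insert h]
    exact (hne _).add ih

lemma vectorSpan_finset_sum {ι V : Type*} [AddCommGroup V] [Module ℝ V] {Δ : ι → Set V}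
    (hne : ∀ j, (Δ j).Nonempty) (K : Finset ι) :
    vectorSpan ℝ (∑ j ∈ K, Δ j) = ⨆ j ∈ K, vectorSpan ℝ (Δ j) := by
  classical
  induction K using Finset.induction with
  | empty => simp [show (0 : Set V) = {0} from rfl]
  | @insert a K h ih =>
    rw [Finset.sum_insert h, vectorSpan_set_add (hne a) (sum_set_nonempty hne K), ih,
      Finset.iSup_insert]

theorem dim_minkowski_sum_submodular (n : ℕ)
    (Δ : Fin (n + 1) → Set (Fin n → ℝ)) (hΔ : ∀ j, IsPolytope (Δ j))
    (I J : Finset (Fin (n + 1))) :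
    polyDim (∑ j ∈ I ∩ J, Δ j) + polyDim (∑ j ∈ I ∪ J, Δ j) ≤
      polyDim (∑ j ∈ I, Δ j) + polyDim (∑ j ∈ J, Δ j) := by
  have hne : ∀ j, (Δ j).Nonempty := by
    intro j
    obtain ⟨s, hs, hP⟩ := hΔ j
    rw [hP]
    exact convexHull_nonempty_iff.mpr (by exact_mod_cast hs.to_set)
  have key : ∀ K : Finset (Fin (n + 1)),
      polyDim (∑ j ∈ K, Δ j) = Module.finrank ℝ (⨆ j ∈ K, vectorSpan ℝ (Δ j) : Submodule ℝ _) := by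
    intro K
    rw [polyDim, direction_affineSpan, vectorSpan_finset_sum hne]
  rw [key, key, key, key]
  set W : Fin (n + 1) → Submodule ℝ (Fin n → ℝ) := fun j => vectorSpan ℝ (Δ j)
  have hunion : (⨆ j ∈ I ∪ J, W j) = (⨆ j ∈ I, W j) ⊔ (⨆ j ∈ J, W j) := Finset.iSup_union
  have hinter : (⨆ j ∈ I ∩ J, W j) ≤ (⨆ j ∈ I, W j) ⊓ (⨆ j ∈ J, W j) := by
    refine iSup₂_le fun j hj => ?_
    rw [Finset.mem_inter] at hj
    exact le_inf (le_iSup₂ (f := fun j _ => W j) j hj.1) (le_iSup₂ (f := fun j _ => W j) j hj.2)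
  rw [hunion]
  calc Module.finrank ℝ (⨆ j ∈ I ∩ J, W j : Submodule ℝ _) +
        Module.finrank ℝ ((⨆ j ∈ I, W j) ⊔ (⨆ j ∈ J, W j) : Submodule ℝ _)
      ≤ Module.finrank ℝ ((⨆ j ∈ I, W j) ⊓ (⨆ j ∈ J, W j) : Submodule ℝ _) +
        Module.finrank ℝ ((⨆ j ∈ I, W j) ⊔ (⨆ j ∈ J, W j) : Submodule ℝ _) := by
        gcongr
        exact Submodule.finrank_mono hinter
    _ = Module.finrank ℝ (⨆ j ∈ I, W j : Submodule ℝ _) +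
        Module.finrank ℝ (⨆ j ∈ J, W j : Submodule ℝ _) := by
        rw [add_comm]
        exact Submodule.finrank_sup_add_finrank_inf_eq _ _
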